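/- If Y is the complete intersection of two general divisors of type (a1,a2,a3) on P^1×P^1×P^1 (with all ai ≥ 0, not all zero), then the arithmetic genus of Y equals 6·a1·a2·a3 - 2·(a1·a2+a2·a3+a3·a1) + 1. -/
import Mathlib


/-- `ℤ[t₁,t₂,t₃]/(t₁², t₂², t₃²)`, the Chow ring of `ℙ¹ × ℙ¹ × ℙ¹`. -/
noncomputable abbrev ChowP111 : Type :=
  MvPolynomial (Fin 3) ℤ ⧸
    Ideal.span (Set.range fun i : Fin 3 => (MvPolynomial.X i : MvPolynomial (Fin 3) ℤ) ^ 2)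

/-- The class of `tᵢ` in `ℤ[t₁,t₂,t₃]/(t₁², t₂², t₃²)`. -/
noncomputable def t (i : Fin 3) : ChowP111 :=
  Ideal.Quotient.mk _ (MvPolynomial.X i)

open MvPolynomial in
/-- If `n·X₀X₁X₂` lies in the ideal `(X₀², X₁², X₂²)`, then `n = 0`. -/
lemma chow_free (n : ℤ)
    (h : (MvPolynomial.C n * (X 0 * X 1 * X 2) : MvPolynomial (Fin 3) ℤ) ∈
      Ideal.span (Set.range fun i : Fin 3 => (X i : MvPolynomial (Fin 3) ℤ) ^ 2)) :
    n = 0 := by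
  rw [Ideal.mem_span_range_iff_exists_fun] at h
  obtain ⟨c, hc⟩ := h
  set d : Fin 3 →₀ ℕ := Finsupp.single 0 1 + Finsupp.single 1 1 + Finsupp.single 2 1 with hd
  have hcoeff := congrArg (coeff d) hc
  have hXd : (X 0 * X 1 * X 2 : MvPolynomial (Fin 3) ℤ) = monomial d 1 := by
    rw [hd]; simp [X, monomial_mul]
  rw [hXd, Fin.sum_univ_three] at hcoeff
  have hsq : ∀ i : Fin 3, (X i : MvPolynomial (Fin 3) ℤ) ^ 2 = monomial (Finsupp.single i 2) 1 := by
    intro i; rw [X_pow_eq_monomial]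
  have hdi : ∀ i : Fin 3, ¬ (Finsupp.single i 2 ≤ d) := by
    intro i
    rw [Finsupp.single_le_iff]
    fin_cases i <;> simp [hd, Finsupp.single_apply]
  simp only [coeff_add, hsq, coeff_mul_monomial', hdi, if_false, C_mul_monomial, mul_one,
    coeff_monomial, if_true, add_zero, zero_add] at hcoeff
  omega

lemma tsq (i : Fin 3) : t i ^ 2 = 0 := by
  rw [t, ← map_pow, Ideal.Quotient.eq_zero_iff_mem]
  exact Ideal.subset_span ⟨i, rfl⟩

lemma smul_ttt (n : ℤ) : n • (t 0 * t 1 * t 2) =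
    Ideal.Quotient.mk _ (MvPolynomial.C n *
      (MvPolynomial.X 0 * MvPolynomial.X 1 * MvPolynomial.X 2)) := by
  rw [map_mul, eq_intCast (MvPolynomial.C (σ := Fin 3) (R := ℤ)) n, map_intCast,
    zsmul_eq_mul, t, t, t, map_mul, map_mul]

lemma smul_ttt_inj (n : ℤ) (h : n • (t 0 * t 1 * t 2) = 0) : n = 0 := by
  rw [smul_ttt, Ideal.Quotient.eq_zero_iff_mem] at h
  exact chow_free n h

set_option maxHeartbeats 1000000

/-- Let `Y` be the complete intersection of two general divisors of type `(a₁,a₂,a₃)` on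
`ℙ¹ × ℙ¹ × ℙ¹`, with all `aᵢ ≥ 0` and not all zero.  Its class in the Chow ring is
`(a₁t₁+a₂t₂+a₃t₃)²` and, by adjunction, `ω_Y ≅ O_Y(2a₁-2, 2a₂-2, 2a₃-2)`, so the
arithmetic genus `p_a(Y)` is determined by
`(2·p_a(Y) - 2)·t₁t₂t₃ = (a₁t₁+a₂t₂+a₃t₃)²·((2a₁-2)t₁+(2a₂-2)t₂+(2a₃-2)t₃)`.
Then `p_a(Y) = 6a₁a₂a₃ - 2(a₁a₂+a₂a₃+a₃a₁) + 1`. -/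
theorem genus_of_complete_intersection (a1 a2 a3 : ℤ)
    (h1 : 0 ≤ a1) (h2 : 0 ≤ a2) (h3 : 0 ≤ a3)
    (hne : ¬(a1 = 0 ∧ a2 = 0 ∧ a3 = 0)) (pa : ℤ)
    (hpa : (a1 • t 0 + a2 • t 1 + a3 • t 2) ^ 2 *
        ((2 * a1 - 2) • t 0 + (2 * a2 - 2) • t 1 + (2 * a3 - 2) • t 2) =
      (2 * pa - 2) • (t 0 * t 1 * t 2)) :
    pa = 6 * a1 * a2 * a3 - 2 * (a1 * a2 + a2 * a3 + a3 * a1) + 1 := by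
  have hk : (a1 • t 0 + a2 • t 1 + a3 • t 2) ^ 2 *
        ((2 * a1 - 2) • t 0 + (2 * a2 - 2) • t 1 + (2 * a3 - 2) • t 2) =
      (12 * a1 * a2 * a3 - 4 * (a1 * a2 + a2 * a3 + a3 * a1)) • (t 0 * t 1 * t 2) := by
    have h0 := tsq 0
    have h1' := tsq 1
    have h2' := tsq 2
    simp only [zsmul_eq_mul]
    linear_combination (norm := (push_cast; ring1))
      ((a1:ChowP111)^2*((2*a1-2)*t 0+(2*a2-2)*t 1+(2*a3-2)*t 2)
        + 2*a1*a2*(2*a1-2)*t 1 + 2*a1*a3*(2*a1-2)*t 2) * h0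
      + ((a2:ChowP111)^2*((2*a1-2)*t 0+(2*a2-2)*t 1+(2*a3-2)*t 2)
        + 2*a1*a2*(2*a2-2)*t 0 + 2*a2*a3*(2*a2-2)*t 2) * h1'
      + ((a3:ChowP111)^2*((2*a1-2)*t 0+(2*a2-2)*t 1+(2*a3-2)*t 2)
        + 2*a1*a3*(2*a3-2)*t 0 + 2*a2*a3*(2*a3-2)*t 1) * h2'
  have hz : ((2 * pa - 2) - (12 * a1 * a2 * a3 - 4 * (a1 * a2 + a2 * a3 + a3 * a1))) •
      (t 0 * t 1 * t 2) = 0 := by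
    rw [sub_smul, ← hpa, hk, sub_self]
  have := smul_ttt_inj _ hz
  linarith
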